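/- For any left-invariant metric d on the symmetric group S_n, the distance from any adjacent transposition (i, i+1) to the identity equals the distance from (1, 2) to the identity, provided d satisfies the line property: d(π,σ) = d(π,ω) + d(ω,σ) if and only if ω is between π and σ (where ω is between π and σ means for every pair {a,b}, ω agrees with π or σ on the relative order of a and b). -/
import Mathlib


open Equiv Finset

/-- The adjacent transposition swapping positions `i` and `i+1` (0-indexed);
identity if out of range. -/
def adjSwap (n i : ℕ) : Equiv.Perm (Fin n) :=
  if h : i + 1 < n then Equiv.swap ⟨i, Nat.lt_of_succ_lt h⟩ ⟨i + 1, h⟩ else 1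

/-- `ω` is between `π` and `σ`: on every pair `{a,b}`, `ω` agrees with `π` or with `σ`. -/
def Between {n : ℕ} (π ω σ : Equiv.Perm (Fin n)) : Prop :=
  ∀ a b : Fin n, (π⁻¹ a < π⁻¹ b ↔ ω⁻¹ a < ω⁻¹ b) ∨ (σ⁻¹ a < σ⁻¹ b ↔ ω⁻¹ a < ω⁻¹ b)

/-- Kendall tau distance: minimum number of adjacent transpositions transforming `π` into `σ`. -/
noncomputable def kendall {n : ℕ} (π σ : Equiv.Perm (Fin n)) : ℕ :=
  sInf {s | ∃ l : List ℕ, (∀ i ∈ l, i + 1 < n) ∧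
    σ = π * (l.map (adjSwap n)).prod ∧ l.length = s}

/-- The set of inversions between `π` and `σ` (each unordered pair `{i,j}` of disagreement
is recorded as the ordered pair `(i,j)` with `i` ranked before `j` by `π`). -/
def invSet {n : ℕ} (π σ : Equiv.Perm (Fin n)) : Finset (Fin n × Fin n) :=
  Finset.univ.filter fun p => π⁻¹ p.1 < π⁻¹ p.2 ∧ σ⁻¹ p.2 < σ⁻¹ p.1

/-- Elements `j` on whose relative order with `i` the permutations `π` and `σ` disagree. -/
def invWith {n : ℕ} (π σ : Equiv.Perm (Fin n)) (i : Fin n) : Finset (Fin n) :=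
  Finset.univ.filter fun j => ¬(π⁻¹ i < π⁻¹ j ↔ σ⁻¹ i < σ⁻¹ j)

/-- Weighted Kendall distance for weight function `φ` on adjacent transpositions
(`φ h` is the weight of swapping positions `h, h+1`, 0-indexed). -/
noncomputable def wKendall {n : ℕ} (φ : ℕ → ℝ) (π σ : Equiv.Perm (Fin n)) : ℝ :=
  sInf {w | ∃ l : List ℕ, (∀ i ∈ l, i + 1 < n) ∧
    σ = π * (l.map (adjSwap n)).prod ∧ (l.map φ).sum = w}

/-- `w(k:l)`: sum of adjacent-transposition weights between positions `min k l` and `max k l - 1`. -/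
def wsum (φ : ℕ → ℝ) (k l : ℕ) : ℝ := ∑ h ∈ Finset.Ico (min k l) (max k l), φ h

/-- The generalized (weighted) Spearman footrule `D_φ`. -/
noncomputable def DKendall {n : ℕ} (φ : ℕ → ℝ) (π σ : Equiv.Perm (Fin n)) : ℝ :=
  ∑ i : Fin n, wsum φ ((π⁻¹ i : Fin n) : ℕ) ((σ⁻¹ i : Fin n) : ℕ)

/-- Weighted transposition distance with weight function `φ` on transpositions. -/
noncomputable def wTrans {n : ℕ} (φ : Fin n → Fin n → ℝ) (π σ : Equiv.Perm (Fin n)) : ℝ :=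
  sInf {w | ∃ l : List (Fin n × Fin n), (∀ p ∈ l, p.1 ≠ p.2) ∧
    σ = π * (l.map fun p => Equiv.swap p.1 p.2).prod ∧
    (l.map fun p => φ p.1 p.2).sum = w}

/-- Weight of a path (as a list of vertices) in the complete graph `K_φ`. -/
def pathWt {n : ℕ} (φ : Fin n → Fin n → ℝ) (p : List (Fin n)) : ℝ :=
  ((p.zip p.tail).map fun q => φ q.1 q.2).sum

/-- `p` is a path from `a` to `b` (consecutive vertices distinct). -/
def IsPath {n : ℕ} (p : List (Fin n)) (a b : Fin n) : Prop :=
  p.head? = some a ∧ p.getLast? = some b ∧ p.Chain' (· ≠ ·)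

/-- Minimum weight of a path from `a` to `b` in `K_φ`. -/
noncomputable def minPathWt {n : ℕ} (φ : Fin n → Fin n → ℝ) (a b : Fin n) : ℝ :=
  sInf {w | ∃ p : List (Fin n), IsPath p a b ∧ pathWt φ p = w}

/-- The footrule-type lower/upper bounding function `D_φ` for transposition weights. -/
noncomputable def DTrans {n : ℕ} (φ : Fin n → Fin n → ℝ) (π σ : Equiv.Perm (Fin n)) : ℝ :=
  ∑ i : Fin n, minPathWt φ (π⁻¹ i) (σ⁻¹ i)


private lemma btwA (n : ℕ) (a b c : Fin n) (hab : (a:ℕ)+1 = b) (hbc : (b:ℕ)+1 = c) :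
    Between 1 (Equiv.swap a b) (Equiv.swap a c) := by
  intro x y
  simp only [inv_one, Equiv.Perm.one_apply, Equiv.swap_inv, Equiv.swap_apply_def, Fin.lt_def,
    Fin.ext_iff]
  split_ifs <;> omega

private lemma btwA' (n : ℕ) (a b c : Fin n) (hab : (a:ℕ)+1 = b) (hbc : (b:ℕ)+1 = c) :
    Between 1 (Equiv.swap b c) (Equiv.swap a c) := by
  intro x y
  simp only [inv_one, Equiv.Perm.one_apply, Equiv.swap_inv, Equiv.swap_apply_def, Fin.lt_def,
    Fin.ext_iff]
  split_ifs <;> omega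

private lemma btwB (n : ℕ) (a b c : Fin n) (hab : (a:ℕ)+1 = b) (hbc : (b:ℕ)+1 = c) :
    Between (Equiv.swap a b) (Equiv.swap a b * Equiv.swap b c) (Equiv.swap a c) := by
  intro x y
  simp only [mul_inv_rev, Equiv.swap_inv, Equiv.Perm.mul_apply, Equiv.swap_apply_def, Fin.lt_def,
    Fin.ext_iff]
  split_ifs <;> omega

private lemma btwB' (n : ℕ) (a b c : Fin n) (hab : (a:ℕ)+1 = b) (hbc : (b:ℕ)+1 = c) :
    Between (Equiv.swap b c) (Equiv.swap b c * Equiv.swap a b) (Equiv.swap a c) := by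
  intro x y
  simp only [mul_inv_rev, Equiv.swap_inv, Equiv.Perm.mul_apply, Equiv.swap_apply_def, Fin.lt_def,
    Fin.ext_iff]
  split_ifs <;> omega

private lemma word1 (n : ℕ) (a b c : Fin n) (hab : (a:ℕ)+1 = b) (hbc : (b:ℕ)+1 = c) :
    Equiv.swap a c = Equiv.swap a b * Equiv.swap b c * Equiv.swap a b := by
  ext x
  simp only [Equiv.Perm.mul_apply, Equiv.swap_apply_def, Fin.ext_iff]
  split_ifs <;> omega

private lemma word2 (n : ℕ) (a b c : Fin n) (hab : (a:ℕ)+1 = b) (hbc : (b:ℕ)+1 = c) :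
    Equiv.swap a c = Equiv.swap b c * Equiv.swap a b * Equiv.swap b c := by
  ext x
  simp only [Equiv.Perm.mul_apply, Equiv.swap_apply_def, Fin.ext_iff]
  split_ifs <;> omega

private lemma key (n : ℕ) (d : Equiv.Perm (Fin n) → Equiv.Perm (Fin n) → ℝ)
    (h_linv : ∀ η π σ, d (η * π) (η * σ) = d π σ)
    (h_line : ∀ π σ ω : Equiv.Perm (Fin n), d π σ = d π ω + d ω σ ↔ Between π ω σ)
    (i : ℕ) (h : i + 2 < n) :
    d 1 (adjSwap n i) = d 1 (adjSwap n (i+1)) := by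
  set a : Fin n := ⟨i, by omega⟩
  set b : Fin n := ⟨i+1, by omega⟩
  set c : Fin n := ⟨i+2, by omega⟩
  have hab : (a:ℕ)+1 = b := rfl
  have hbc : (b:ℕ)+1 = c := rfl
  have hs : adjSwap n i = Equiv.swap a b := by
    rw [adjSwap, dif_pos (by omega : i + 1 < n)]
  have hs' : adjSwap n (i+1) = Equiv.swap b c := by
    rw [adjSwap, dif_pos (by omega : i + 1 + 1 < n)]
  rw [hs, hs']
  set s := Equiv.swap a b
  set s' := Equiv.swap b c
  set ρ := Equiv.swap a c
  have e1 : d 1 ρ = d 1 s + d s ρ := (h_line 1 ρ s).mpr (btwA n a b c hab hbc)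
  have e1' : d 1 ρ = d 1 s' + d s' ρ := (h_line 1 ρ s').mpr (btwA' n a b c hab hbc)
  have e2 : d s ρ = d s (s * s') + d (s * s') ρ :=
    (h_line s ρ (s * s')).mpr (btwB n a b c hab hbc)
  have e2' : d s' ρ = d s' (s' * s) + d (s' * s) ρ :=
    (h_line s' ρ (s' * s)).mpr (btwB' n a b c hab hbc)
  have e3 : d s (s * s') = d 1 s' := by
    have := h_linv s 1 s'; simpa using this
  have e3' : d s' (s' * s) = d 1 s := by
    have := h_linv s' 1 s; simpa using this
  have e4 : d (s * s') ρ = d 1 s := by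
    have := h_linv (s * s') 1 s
    rw [mul_one, ← word1 n a b c hab hbc] at this
    exact this
  have e4' : d (s' * s) ρ = d 1 s' := by
    have := h_linv (s' * s) 1 s'
    rw [mul_one, ← word2 n a b c hab hbc] at this
    exact this
  linarith

theorem stmt0 (n : ℕ) (hn : 3 ≤ n) (d : Equiv.Perm (Fin n) → Equiv.Perm (Fin n) → ℝ)
    (h_nonneg : ∀ π σ, 0 ≤ d π σ)
    (h_eq : ∀ π σ, d π σ = 0 ↔ π = σ)
    (h_symm : ∀ π σ, d π σ = d σ π)
    (h_tri : ∀ π σ ω, d π σ ≤ d π ω + d ω σ)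
    (h_linv : ∀ η π σ, d (η * π) (η * σ) = d π σ)
    (h_line : ∀ π σ ω : Equiv.Perm (Fin n), d π σ = d π ω + d ω σ ↔ Between π ω σ)
    (i : ℕ) (hi : i + 1 < n) :
    d (adjSwap n i) 1 = d (adjSwap n 0) 1 := by
  have hsymm0 : ∀ j, d (adjSwap n j) 1 = d 1 (adjSwap n j) := fun j => h_symm _ _
  rw [hsymm0, hsymm0]
  induction i with
  | zero => rfl
  | succ k ih =>
    rw [← key n d h_linv h_line k hi]
    exact ih (by omega)
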